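/- arXiv:1802.08996 — 3 statements merged into one kernel-verified Lean document; each statement's English description precedes it below -/
import Mathlib

section
/- Let Γ be a group that is finite-by-abelian (i.e., Γ has a finite normal subgroup N such that Γ/N is abelian) and assume Γ is linear, i.e., Γ embeds as a subgroup of GL_n(k) for some field k. Then Γ is virtually abelian, i.e., Γ has an abelian subgroup of finite index. -/
open scoped commutatorElement

/-- A centralizer of a single element has finite index in a finite-by-abelian group. -/
theorem aux_centralizer_finiteIndex {Γ : Type*} [Group Γ]
    (N : Subgroup Γ) (hNfin : Finite N)
    (hab : ∀ a b : Γ, ⁅a, b⁆ ∈ N) (g : Γ) :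
    (Subgroup.centralizer {g}).FiniteIndex := by
  set C := Subgroup.centralizer ({g} : Set Γ) with hC
  have hmem : ∀ c : Γ, c ∈ C ↔ g * c = c * g := by
    intro c
    simp [hC, Subgroup.mem_centralizer_iff]
  -- injection from the quotient into N
  have key : ∀ x y : Γ, x⁻¹ * y ∈ C → (⟨⁅g, x⁆, hab g x⟩ : N) = ⟨⁅g, y⁆, hab g y⟩ := by
    intro x y hxy
    have hc : g * (x⁻¹ * y) = (x⁻¹ * y) * g := (hmem _).1 hxy
    have hcom : Commute g (x⁻¹ * y) := hc
    have hcom' : Commute (x⁻¹ * y) g⁻¹ := hcom.symm.inv_right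
    have hy : y = x * (x⁻¹ * y) := by group
    ext
    show ⁅g, x⁆ = ⁅g, y⁆
    calc ⁅g, x⁆ = g * x * g⁻¹ * x⁻¹ := commutatorElement_def g x
      _ = g * x * ((x⁻¹ * y) * g⁻¹ * (x⁻¹ * y)⁻¹) * x⁻¹ := by
          rw [hcom'.eq]; group
      _ = g * (x * (x⁻¹ * y)) * g⁻¹ * (x * (x⁻¹ * y))⁻¹ := by group
      _ = g * y * g⁻¹ * y⁻¹ := by rw [← hy]
      _ = ⁅g, y⁆ := (commutatorElement_def g y).symm
  have hinj : Function.Injective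
      (fun q : Γ ⧸ C => Quotient.liftOn' q (fun b => (⟨⁅g, b⁆, hab g b⟩ : N))
        (fun x y h => key x y (QuotientGroup.leftRel_apply.mp h))) := by
    intro q₁ q₂
    induction q₁ using Quotient.inductionOn'
    induction q₂ using Quotient.inductionOn'
    rename_i x y
    intro h
    have h' : (⁅g, x⁆ : Γ) = ⁅g, y⁆ := congrArg Subtype.val h
    rw [commutatorElement_def, commutatorElement_def] at h'
    apply Quotient.sound'
    rw [QuotientGroup.leftRel_apply]
    rw [hmem]
    -- from g x g⁻¹ x⁻¹ = g y g⁻¹ y⁻¹ derive g (x⁻¹ y) = (x⁻¹ y) g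
    have h2 : x * g⁻¹ * x⁻¹ = y * g⁻¹ * y⁻¹ := by
      have := h'
      apply mul_left_cancel (a := g)
      calc g * (x * g⁻¹ * x⁻¹) = g * x * g⁻¹ * x⁻¹ := by group
        _ = g * y * g⁻¹ * y⁻¹ := this
        _ = g * (y * g⁻¹ * y⁻¹) := by group
    have h3 : g⁻¹ * (x⁻¹ * y) = (x⁻¹ * y) * g⁻¹ := by
      calc g⁻¹ * (x⁻¹ * y) = x⁻¹ * (x * g⁻¹ * x⁻¹) * y := by group
        _ = x⁻¹ * (y * g⁻¹ * y⁻¹) * y := by rw [h2]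
        _ = (x⁻¹ * y) * g⁻¹ := by group
    have : Commute g⁻¹ (x⁻¹ * y) := h3
    simpa using this.inv_left.eq
  have : Finite (Γ ⧸ C) := Finite.of_injective _ hinj
  exact Subgroup.finiteIndex_of_finite_quotient

/-- A finite-by-abelian linear group is virtually abelian. -/
theorem stmt_0 {Γ : Type*} [Group Γ]
    (N : Subgroup Γ) (hN : N.Normal) (hNfin : Finite N)
    (hab : ∀ a b : Γ, ⁅a, b⁆ ∈ N)
    (k : Type*) [Field k] (n : ℕ)
    (f : Γ →* GL (Fin n) k) (hf : Function.Injective f) :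
    ∃ H : Subgroup Γ, H.FiniteIndex ∧ ∀ a ∈ H, ∀ b ∈ H, a * b = b * a := by
  classical
  set M := Matrix (Fin n) (Fin n) k
  set F : Γ → M := fun g => ((f g : GL (Fin n) k) : M) with hF
  set s : Set M := Set.range F with hs
  obtain ⟨b, hbs, hspan, hli⟩ := exists_linearIndependent k s
  have hbfin : b.Finite := hli.setFinite
  -- T : preimage of b in Γ
  set T : Set Γ := F ⁻¹' b with hT
  have hTfin : T.Finite := by
    apply Set.Finite.preimage _ hbfin
    intro x _ y _ hxy
    apply hf
    exact Units.ext hxy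
  have hTfin' : Finite T := hTfin
  refine ⟨⨅ g : T, Subgroup.centralizer {(g : Γ)}, ?_, ?_⟩
  · exact Subgroup.finiteIndex_iInf fun g =>
      aux_centralizer_finiteIndex N hNfin hab (g : Γ)
  · intro a ha c hc
    -- a commutes with every element of b
    have hacomm : ∀ x ∈ b, F a * x = x * F a := by
      intro x hx
      obtain ⟨g, hg⟩ := hbs hx
      have hgT : g ∈ T := by rw [hT, Set.mem_preimage, hg]; exact hx
      have := Subgroup.mem_iInf.mp ha ⟨g, hgT⟩
      have hag : g * a = a * g := by
        simpa [Subgroup.mem_centralizer_iff] using this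
      have : f a * f g = f g * f a := by
        rw [← map_mul, ← map_mul, ← hag]
      calc F a * x = F a * F g := by rw [hg]
        _ = ((f a * f g : GL (Fin n) k) : M) := by simp [hF, Units.val_mul]
        _ = ((f g * f a : GL (Fin n) k) : M) := by rw [this]
        _ = F g * F a := by simp [hF, Units.val_mul]
        _ = x * F a := by rw [hg]
    -- hence a commutes with the span of b, which contains F c
    have hcin : F c ∈ Submodule.span k b := by
      rw [hspan]
      exact Submodule.subset_span ⟨c, rfl⟩
    have hcomm2 : ∀ x ∈ Submodule.span k b, F a * x = x * F a := by
      intro x hx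
      induction hx using Submodule.span_induction with
      | mem x hx => exact hacomm x hx
      | zero => simp
      | add x y _ _ hx hy => rw [Matrix.mul_add, Matrix.add_mul, hx, hy]
      | smul t x _ hx => rw [Matrix.mul_smul, Matrix.smul_mul, hx]
    apply hf
    apply Units.ext
    rw [map_mul, map_mul]
    exact hcomm2 _ hcin
end

section
/- Let V be an infinite-dimensional vector space over a finite field F of characteristic different from 2, and let ω : V × V → F be a symplectic (alternating, bilinear) form on V. Define the Heisenberg group Γ = V × F with multiplication (v, λ)(w, β) = (v + w, λ + β + ω(v, w)). Then Γ is a group which is finite-by-abelian but not virtually abelian, provided ω is nondegenerate. -/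
open scoped commutatorElement

/-- The Heisenberg group `Γ = V × F` of a nondegenerate alternating bilinear form `ω` on an
infinite-dimensional vector space `V` over a finite field `F` of characteristic `≠ 2`
(with multiplication `(v,λ)(w,β) = (v+w, λ+β+ω(v,w))`) is finite-by-abelian but not
virtually abelian. -/
theorem stmt_1 {F V : Type*} [Field F] [Finite F] [AddCommGroup V] [Module F V]
    (hchar : ringChar F ≠ 2) (hV : ¬ Module.Finite F V)
    (ω : LinearMap.BilinForm F V) (halt : ω.IsAlt) (hnd : ω.Nondegenerate)
    [Group (V × F)]
    (hmul : ∀ p q : V × F, p * q = (p.1 + q.1, p.2 + q.2 + ω p.1 q.1)) :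
    (∃ N : Subgroup (V × F), N.Normal ∧ Finite N ∧ ∀ a b : V × F, ⁅a, b⁆ ∈ N) ∧
    ¬ ∃ H : Subgroup (V × F), H.FiniteIndex ∧ ∀ a ∈ H, ∀ b ∈ H, a * b = b * a := by
  -- identity and inverse formulas
  have hone1 : (1 : V × F).1 = 0 := by
    have h := hmul 1 1
    rw [mul_one] at h
    have h1 : (1 : V × F).1 = (1 : V × F).1 + (1 : V × F).1 := congrArg Prod.fst h
    exact (left_eq_add.mp h1)
  have hinv : ∀ p : V × F, p⁻¹ = (-p.1, -p.2) := by
    intro p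
    have h := hmul p p⁻¹
    rw [mul_inv_cancel] at h
    have h1 : (1 : V × F).1 = p.1 + p⁻¹.1 := congrArg Prod.fst h
    rw [hone1] at h1
    have hfst : p⁻¹.1 = -p.1 := eq_neg_of_add_eq_zero_right h1.symm
    have h2 : (1 : V × F).2 = p.2 + p⁻¹.2 + ω p.1 p⁻¹.1 := congrArg Prod.snd h
    have hone2 : (1 : V × F).2 = 0 := by
      have h' := hmul 1 1
      rw [mul_one] at h'
      have h2' : (1 : V × F).2 = (1 : V × F).2 + (1 : V × F).2 + ω (1 : V × F).1 (1 : V × F).1 :=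
        congrArg Prod.snd h'
      rw [hone1] at h2'
      simp only [map_zero, LinearMap.zero_apply, add_zero] at h2'
      exact (left_eq_add.mp h2')
    rw [hone2, hfst, map_neg, halt p.1, neg_zero, add_zero] at h2
    have hsnd : p⁻¹.2 = -p.2 := eq_neg_of_add_eq_zero_right h2.symm
    exact Prod.ext hfst hsnd
  have hfst : ∀ p q : V × F, (p * q).1 = p.1 + q.1 := fun p q => by rw [hmul]
  constructor
  · -- finite-by-abelian
    refine ⟨{ carrier := {p | p.1 = 0}
              one_mem' := hone1
              mul_mem' := fun {a b} ha hb => by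
                simp only [Set.mem_setOf_eq] at *
                rw [hfst, ha, hb, add_zero]
              inv_mem' := fun {a} ha => by
                simp only [Set.mem_setOf_eq] at *
                rw [hinv a]
                simp [ha] }, ?_, ?_, ?_⟩
    · exact ⟨fun n hn g => by
        simp only [Subgroup.mem_mk, Set.mem_setOf_eq] at *
        change n.1 = 0 at hn
        show (g * n * g⁻¹).1 = 0
        rw [hfst, hfst, hinv g, hn]
        simp⟩
    · refine Finite.of_injective (fun n => (n : V × F).2) ?_
      rintro ⟨n, hn⟩ ⟨m, hm⟩ h
      simp only [Subgroup.mem_mk, Set.mem_setOf_eq] at hn hm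
      exact Subtype.ext (Prod.ext (hn.trans hm.symm) h)
    · intro a b
      show (⁅a, b⁆).1 = 0
      rw [commutatorElement_def, hfst, hfst, hfst, hinv a, hinv b]
      simp
  · -- not virtually abelian
    rintro ⟨H, hfi, hcomm⟩
    have htwo : (2 : F) ≠ 0 := Ring.two_ne_zero hchar
    have key : ∀ a ∈ H, ∀ b ∈ H, ω a.1 b.1 = 0 := by
      intro a ha b hb
      have h := hcomm a ha b hb
      rw [hmul, hmul] at h
      have h2 : a.2 + b.2 + ω a.1 b.1 = b.2 + a.2 + ω b.1 a.1 := congrArg Prod.snd h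
      have hba : ω b.1 a.1 = -ω a.1 b.1 := (LinearMap.IsAlt.neg halt a.1 b.1).symm
      have hx : ω a.1 b.1 = ω b.1 a.1 := by linear_combination h2
      rw [hba] at hx
      have h3 : (2 : F) * ω a.1 b.1 = 0 := by linear_combination hx
      exact (mul_eq_zero.mp h3).resolve_left htwo
    -- project to V
    let f : (V × F) →* Multiplicative V :=
      { toFun := fun p => Multiplicative.ofAdd p.1
        map_one' := by show Multiplicative.ofAdd (1 : V × F).1 = 1; rw [hone1]; rfl
        map_mul' := fun p q => by show Multiplicative.ofAdd (p * q).1 = _; rw [hmul]; rfl }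
    have hf : Function.Surjective f := fun v => ⟨(v.toAdd, 0), rfl⟩
    let W : Subgroup (Multiplicative V) := H.map f
    have hWfi : W.FiniteIndex := by
      constructor
      intro h0
      have hdvd := Subgroup.index_map_dvd (H := H) hf
      rw [h0] at hdvd
      exact hfi.index_ne_zero (zero_dvd_iff.mp hdvd)
    have hVinf : Infinite V := by
      by_contra hfin
      rw [not_infinite_iff_finite] at hfin
      exact hV Module.Finite.of_finite
    have hWinf : Infinite W := by
      by_contra hfin
      rw [not_infinite_iff_finite] at hfin
      have hc := W.card_mul_index
      have hz : Nat.card (Multiplicative V) = 0 := Nat.card_eq_zero_of_infinite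
      rw [hz] at hc
      rcases mul_eq_zero.mp hc with h | h
      · exact (Nat.card_pos (α := W)).ne' h
      · exact hWfi.index_ne_zero h
    haveI := hWfi
    haveI : Finite (Multiplicative V ⧸ W) := Subgroup.finite_quotient_of_finiteIndex (H := W)
    have hiso : ∀ x y : Multiplicative V, x ∈ W → y ∈ W → ω x.toAdd y.toAdd = 0 := by
      intro x y hx hy
      rcases Subgroup.mem_map.mp hx with ⟨a, ha, hax⟩
      rcases Subgroup.mem_map.mp hy with ⟨b, hb, hby⟩
      have hax' : a.1 = x.toAdd := congrArg Multiplicative.toAdd hax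
      have hby' : b.1 = y.toAdd := congrArg Multiplicative.toAdd hby
      rw [← hax', ← hby']
      exact key a ha b hb
    let Φ : W → ((Multiplicative V ⧸ W) → F) := fun w q =>
      Quotient.liftOn' q (fun v => ω w.1.toAdd v.toAdd) (by
        intro v1 v2 hv
        have hv' : v1⁻¹ * v2 ∈ W := (QuotientGroup.leftRel_apply).mp hv
        have h0 : ω w.1.toAdd (v1⁻¹ * v2).toAdd = 0 := hiso _ _ w.2 hv'
        simp only [toAdd_mul, toAdd_inv, map_add, map_neg] at h0
        linear_combination -h0)
    have hΦinj : Function.Injective Φ := by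
      intro w1 w2 h
      have hall : ∀ v : V, ω w1.1.toAdd v = ω w2.1.toAdd v := by
        intro v
        exact congrFun h (QuotientGroup.mk (Multiplicative.ofAdd v))
      have h0 : ∀ v : V, ω (w1.1.toAdd - w2.1.toAdd) v = 0 := by
        intro v
        rw [map_sub, LinearMap.sub_apply, hall v, sub_self]
      have hz : w1.1.toAdd - w2.1.toAdd = 0 := hnd.1 _ h0
      have : w1.1.toAdd = w2.1.toAdd := sub_eq_zero.mp hz
      exact Subtype.ext this
    haveI := Finite.of_injective Φ hΦinj
    exact not_finite ↥W
end

section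
/- Let Γ be a subgroup of GL_n(k) for an algebraically closed field k such that the commutator subgroup [Γ, Γ] is finite. Let G be the Zariski closure of Γ in GL_n(k). Then [G, G] = [Γ, Γ]; in particular [G, G] is finite. -/
/-- The Zariski topology on the space of `n × n` matrices: closed sets are generated by
zero loci of polynomials in the matrix entries. -/
def matrixZariski (n : ℕ) (k : Type*) [CommRing k] :
    TopologicalSpace (Matrix (Fin n) (Fin n) k) :=
  TopologicalSpace.generateFrom
    {U | ∃ p : MvPolynomial (Fin n × Fin n) k,
      U = {A | (MvPolynomial.eval fun ij => A ij.1 ij.2) p ≠ 0}}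

open scoped commutatorElement

open MvPolynomial in
/-- The set of matrices `B` with `B * C = D * B` is Zariski closed. -/
lemma zar_closed_comm (n : ℕ) (k : Type*) [CommRing k] (C D : Matrix (Fin n) (Fin n) k) :
    @IsClosed _ (matrixZariski n k) {B | B * C = D * B} := by
  set X' : Matrix (Fin n) (Fin n) (MvPolynomial (Fin n × Fin n) k) :=
    Matrix.of fun i j => (X (i, j) : MvPolynomial (Fin n × Fin n) k) with hX'
  set P : Matrix (Fin n) (Fin n) (MvPolynomial (Fin n × Fin n) k) :=
    X' * C.map MvPolynomial.C - (D.map MvPolynomial.C) * X' with hP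
  have key : ∀ (B : Matrix (Fin n) (Fin n) k) (i j : Fin n),
      (MvPolynomial.eval fun ij => B ij.1 ij.2) (P i j) = (B * C - D * B) i j := by
    intro B i j
    set φ : MvPolynomial (Fin n × Fin n) k →+* k :=
      (MvPolynomial.eval fun ij => B ij.1 ij.2) with hφ
    have h1 : φ.mapMatrix X' = B := by
      ext a b
      simp [hX', hφ, RingHom.mapMatrix_apply, Matrix.map_apply]
    have h2 : φ.mapMatrix (C.map MvPolynomial.C) = C := by
      ext a b
      simp [hφ, RingHom.mapMatrix_apply, Matrix.map_apply]
    have h3 : φ.mapMatrix (D.map MvPolynomial.C) = D := by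
      ext a b
      simp [hφ, RingHom.mapMatrix_apply, Matrix.map_apply]
    have h4 : φ.mapMatrix P = B * C - D * B := by
      rw [hP, map_sub, map_mul, map_mul, h1, h2, h3]
    have h5 : (φ.mapMatrix P) i j = φ (P i j) := by
      simp [RingHom.mapMatrix_apply, Matrix.map_apply]
    rw [← h5, h4]
  letI : TopologicalSpace (Matrix (Fin n) (Fin n) k) := matrixZariski n k
  have hset : {B : Matrix (Fin n) (Fin n) k | B * C = D * B} =
      ⋂ ij : Fin n × Fin n,
        {B | (MvPolynomial.eval fun ij => B ij.1 ij.2) (P ij.1 ij.2) = 0} := by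
    ext B
    simp only [Set.mem_iInter, Set.mem_setOf_eq, key]
    constructor
    · intro h ij; rw [h, sub_self, Matrix.zero_apply]
    · intro h; ext i j
      exact sub_eq_zero.mp (h (i, j))
  rw [hset]
  refine isClosed_iInter fun ij => ?_
  have : {B : Matrix (Fin n) (Fin n) k |
        (MvPolynomial.eval fun ij => B ij.1 ij.2) (P ij.1 ij.2) = 0} =
      {B : Matrix (Fin n) (Fin n) k |
        (MvPolynomial.eval fun ij => B ij.1 ij.2) (P ij.1 ij.2) ≠ 0}ᶜ := by
    ext B; simp
  rw [this]
  exact IsOpen.isClosed_compl (TopologicalSpace.isOpen_generateFrom_of_mem ⟨P ij.1 ij.2, rfl⟩)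

/-- For a fixed `a`, the set of `x` whose commutator with `a` lies in a finite subgroup `N`
is closed in the induced Zariski topology on `GL`. -/
lemma gl_closed_comm (n : ℕ) (k : Type*) [Field k] (a : GL (Fin n) k)
    (N : Subgroup (GL (Fin n) k)) (hN : (N : Set (GL (Fin n) k)).Finite) :
    letI : TopologicalSpace (Matrix (Fin n) (Fin n) k) := matrixZariski n k
    letI : TopologicalSpace (GL (Fin n) k) :=
      TopologicalSpace.induced (fun g => (g : Matrix (Fin n) (Fin n) k)) inferInstance
    IsClosed {x : GL (Fin n) k | ⁅x, a⁆ ∈ N} := by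
  letI : TopologicalSpace (Matrix (Fin n) (Fin n) k) := matrixZariski n k
  letI : TopologicalSpace (GL (Fin n) k) :=
    TopologicalSpace.induced (fun g => (g : Matrix (Fin n) (Fin n) k)) inferInstance
  have hiff : ∀ (x m : GL (Fin n) k), ⁅x, a⁆ = m ↔
      (x : Matrix (Fin n) (Fin n) k) * (a : Matrix (Fin n) (Fin n) k) =
        ((m * a : GL (Fin n) k) : Matrix (Fin n) (Fin n) k) * (x : Matrix (Fin n) (Fin n) k) := by
    intro x m
    rw [commutatorElement_def, mul_inv_eq_iff_eq_mul, mul_inv_eq_iff_eq_mul]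
    constructor
    · intro h
      have : x * a = m * a * x := h
      calc (x : Matrix (Fin n) (Fin n) k) * (a : Matrix (Fin n) (Fin n) k)
          = ((x * a : GL (Fin n) k) : Matrix (Fin n) (Fin n) k) := rfl
        _ = ((m * a * x : GL (Fin n) k) : Matrix (Fin n) (Fin n) k) := by rw [this]
        _ = _ := rfl
    · intro h
      have : ((x * a : GL (Fin n) k) : Matrix (Fin n) (Fin n) k)
          = ((m * a * x : GL (Fin n) k) : Matrix (Fin n) (Fin n) k) := h
      exact Units.ext this
  have hset : {x : GL (Fin n) k | ⁅x, a⁆ ∈ N} =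
      (fun g : GL (Fin n) k => (g : Matrix (Fin n) (Fin n) k)) ⁻¹'
        (⋃ m ∈ (N : Set (GL (Fin n) k)),
          {B : Matrix (Fin n) (Fin n) k |
            B * (a : Matrix (Fin n) (Fin n) k) =
              ((m * a : GL (Fin n) k) : Matrix (Fin n) (Fin n) k) * B}) := by
    ext x
    simp only [Set.mem_preimage, Set.mem_iUnion, Set.mem_setOf_eq, SetLike.mem_coe,
      exists_prop]
    constructor
    · intro h
      exact ⟨⁅x, a⁆, h, (hiff x ⁅x, a⁆).mp rfl⟩
    · rintro ⟨m, hm, hx⟩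
      have : ⁅x, a⁆ = m := (hiff x m).mpr hx
      rw [this]; exact hm
  rw [hset]
  exact IsClosed.preimage continuous_induced_dom
    (hN.isClosed_biUnion fun m _ => zar_closed_comm n k _ _)

/-- If `Γ ≤ GL_n(k)` (`k` algebraically closed) has finite commutator subgroup and `G` is the
Zariski closure of `Γ`, then `[G,G] = [Γ,Γ]`; in particular `[G,G]` is finite. -/
theorem stmt_5 (n : ℕ) (k : Type*) [Field k] [IsAlgClosed k]
    (Γ : Subgroup (GL (Fin n) k)) :
    letI : TopologicalSpace (Matrix (Fin n) (Fin n) k) := matrixZariski n k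
    letI : TopologicalSpace (GL (Fin n) k) :=
      TopologicalSpace.induced (fun g => (g : Matrix (Fin n) (Fin n) k)) inferInstance
    Finite (⁅Γ, Γ⁆ : Subgroup (GL (Fin n) k)) →
    ∀ G : Subgroup (GL (Fin n) k),
      (G : Set (GL (Fin n) k)) = closure (Γ : Set (GL (Fin n) k)) →
      (⁅G, G⁆ : Subgroup (GL (Fin n) k)) = ⁅Γ, Γ⁆ ∧
        Finite (⁅G, G⁆ : Subgroup (GL (Fin n) k)) := by
  letI : TopologicalSpace (Matrix (Fin n) (Fin n) k) := matrixZariski n k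
  letI : TopologicalSpace (GL (Fin n) k) :=
    TopologicalSpace.induced (fun g => (g : Matrix (Fin n) (Fin n) k)) inferInstance
  intro hfin G hG
  have hNfin : ((⁅Γ, Γ⁆ : Subgroup (GL (Fin n) k)) : Set (GL (Fin n) k)).Finite :=
    Set.toFinite _
  have hsub : Γ ≤ G := by
    intro x hx
    have : x ∈ (G : Set (GL (Fin n) k)) := hG ▸ subset_closure hx
    exact this
  have step1 : ∀ γ ∈ Γ, ∀ g ∈ G, ⁅g, γ⁆ ∈ (⁅Γ, Γ⁆ : Subgroup (GL (Fin n) k)) := by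
    intro γ hγ g hg
    have hcl := gl_closed_comm n k γ ⁅Γ, Γ⁆ hNfin
    have hΓT : (Γ : Set (GL (Fin n) k)) ⊆ {x | ⁅x, γ⁆ ∈ (⁅Γ, Γ⁆ : Subgroup (GL (Fin n) k))} :=
      fun y hy => Subgroup.commutator_mem_commutator hy hγ
    have hGT : (G : Set (GL (Fin n) k)) ⊆ {x | ⁅x, γ⁆ ∈ (⁅Γ, Γ⁆ : Subgroup (GL (Fin n) k))} :=
      hG ▸ closure_minimal hΓT hcl
    exact hGT hg
  have step2 : ∀ g ∈ G, ∀ h ∈ G, ⁅g, h⁆ ∈ (⁅Γ, Γ⁆ : Subgroup (GL (Fin n) k)) := by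
    intro g hg h hh
    have hcl := gl_closed_comm n k g ⁅Γ, Γ⁆ hNfin
    have hΓT : (Γ : Set (GL (Fin n) k)) ⊆ {x | ⁅x, g⁆ ∈ (⁅Γ, Γ⁆ : Subgroup (GL (Fin n) k))} := by
      intro γ hγ
      have h1 := step1 γ hγ g hg
      show ⁅γ, g⁆ ∈ (⁅Γ, Γ⁆ : Subgroup (GL (Fin n) k))
      rw [← commutatorElement_inv]
      exact Subgroup.inv_mem _ h1
    have hGT : (G : Set (GL (Fin n) k)) ⊆ {x | ⁅x, g⁆ ∈ (⁅Γ, Γ⁆ : Subgroup (GL (Fin n) k))} :=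
      hG ▸ closure_minimal hΓT hcl
    have h2 : ⁅h, g⁆ ∈ (⁅Γ, Γ⁆ : Subgroup (GL (Fin n) k)) := hGT hh
    rw [← commutatorElement_inv]
    exact Subgroup.inv_mem _ h2
  have hle : (⁅G, G⁆ : Subgroup (GL (Fin n) k)) ≤ ⁅Γ, Γ⁆ :=
    Subgroup.commutator_le.mpr step2
  have hge : (⁅Γ, Γ⁆ : Subgroup (GL (Fin n) k)) ≤ ⁅G, G⁆ :=
    Subgroup.commutator_mono hsub hsub
  have heq : (⁅G, G⁆ : Subgroup (GL (Fin n) k)) = ⁅Γ, Γ⁆ := le_antisymm hle hge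
  exact ⟨heq, heq ▸ hfin⟩
end
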